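/- arXiv:1508.03202 — 4 statements merged into one kernel-verified Lean document; each statement's English description precedes it below -/
import Mathlib

section
/- Let H be a complex Hilbert space and A a bounded positive self-adjoint operator on H. Then for every \xi \in H, \inf_{\eta \in H} \left( \|\eta\|^2 + \langle A(\xi - \eta), \xi - \eta \rangle \right) = \langle A(1+A)^{-1}\xi, \xi \rangle, and the infimum is attained at \eta_0 = A(1+A)^{-1}\xi. -/
open scoped InnerProductSpace

/-- Let `A` be a bounded positive self-adjoint operator on a complex Hilbert space, and `B`
the (two-sided) inverse of `1 + A`. Then for every `ξ`,
`inf_η (‖η‖² + ⟨A(ξ-η), ξ-η⟩) = ⟨A(1+A)⁻¹ξ, ξ⟩`, the infimum being attained at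
`η₀ = A(1+A)⁻¹ξ`. -/
theorem stmt_3 {H : Type*} [NormedAddCommGroup H] [InnerProductSpace ℂ H] [CompleteSpace H]
    (A B : H →L[ℂ] H) (hA : A.IsPositive)
    (hB : (1 + A) * B = 1) (hB' : B * (1 + A) = 1) (ξ : H) :
    (∀ η : H, (⟪A (B ξ), ξ⟫_ℂ).re ≤ ‖η‖ ^ 2 + (⟪A (ξ - η), ξ - η⟫_ℂ).re) ∧
    ‖A (B ξ)‖ ^ 2 + (⟪A (ξ - A (B ξ)), ξ - A (B ξ)⟫_ℂ).re = (⟪A (B ξ), ξ⟫_ℂ).re := by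
  have hsym : ∀ x y : H, ⟪A x, y⟫_ℂ = ⟪x, A y⟫_ℂ :=
    hA.1
  have key : B ξ + A (B ξ) = ξ := by
    have h := congrFun (congrArg DFunLike.coe hB) ξ
    simpa [ContinuousLinearMap.mul_apply, ContinuousLinearMap.add_apply] using h
  have hL : (⟪A (B ξ), ξ⟫_ℂ).re = (⟪A (B ξ), B ξ⟫_ℂ).re + ‖A (B ξ)‖ ^ 2 := by
    rw [show ⟪A (B ξ), ξ⟫_ℂ = ⟪A (B ξ), B ξ + A (B ξ)⟫_ℂ from by rw [key],
      inner_add_right]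
    rw [Complex.add_re]
    congr 1
    exact inner_self_eq_norm_sq (𝕜 := ℂ) _
  constructor
  · intro η
    have hξη : ξ - η = B ξ - (η - A (B ξ)) := by
      conv_lhs => rw [← key]
      abel
    set d := η - A (B ξ) with hd
    have hη : η = A (B ξ) + d := by rw [hd]; abel
    have hpos : 0 ≤ (⟪A d, d⟫_ℂ).re := hA.2 d
    have h1 : (⟪A d, B ξ⟫_ℂ).re = (⟪A (B ξ), d⟫_ℂ).re := by
      rw [hsym d (B ξ)]
      exact (inner_re_symm (𝕜 := ℂ) _ _).symm
    have hnorm : ‖η‖ ^ 2 = ‖A (B ξ)‖ ^ 2 + 2 * (⟪A (B ξ), d⟫_ℂ).re + ‖d‖ ^ 2 := by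
      rw [hη]; exact norm_add_sq (𝕜 := ℂ) _ _
    have hexp : (⟪A (ξ - η), ξ - η⟫_ℂ).re
        = (⟪A (B ξ), B ξ⟫_ℂ).re - (⟪A (B ξ), d⟫_ℂ).re - (⟪A d, B ξ⟫_ℂ).re
          + (⟪A d, d⟫_ℂ).re := by
      rw [hξη]
      simp only [map_sub, inner_sub_left, inner_sub_right, Complex.sub_re]
      ring
    rw [hL, hnorm, hexp, h1]
    nlinarith [sq_nonneg ‖d‖]
  · have hsub : ξ - A (B ξ) = B ξ := sub_eq_iff_eq_add.mpr key.symm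
    rw [hsub, hL]
    ring
end

section
/- Let A be a unital C*-algebra (for instance the bounded operators on a complex Hilbert space) and a \in A a positive element. Then for every \varepsilon > 0 and every \alpha \in (0,1), the Bochner integral \frac{\sin(\alpha\pi)}{\pi} \int_0^{\infty} s^{-\alpha} \, (a + (s+\varepsilon)\cdot 1)^{-1} \, ds converges in norm (the integrand having norm at most s^{-\alpha}(s+\varepsilon)^{-1}) and equals (a + \varepsilon \cdot 1)^{-\alpha}, the real power defined by the continuous functional calculus on the positive invertible element a + \varepsilon \cdot 1. -/
open MeasureTheory Real

section Aux
open Set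

lemma beta_real {α : ℝ} (hα : α ∈ Set.Ioo (0:ℝ) 1) :
    IntegrableOn (fun x : ℝ => x ^ (-α) * (1 - x) ^ (α - 1)) (Ioo 0 1) ∧
    ∫ x in Ioo (0:ℝ) 1, x ^ (-α) * (1 - x) ^ (α - 1) = π / Real.sin (π * α) := by
  obtain ⟨hα0, hα1⟩ := hα
  set F : ℝ → ℂ := fun x => (x : ℂ) ^ ((1 - (α:ℂ)) - 1) * (1 - (x : ℂ)) ^ ((α:ℂ) - 1) with hF
  have hu : 0 < Complex.re (1 - (α:ℂ)) := by simp [sub_pos, hα1]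
  have hv : 0 < Complex.re (α:ℂ) := by simpa using hα0
  have hconv : IntervalIntegrable F volume 0 1 := Complex.betaIntegral_convergent hu hv
  have heq : ∀ x ∈ Ioc (0:ℝ) 1, ((x ^ (-α) * (1 - x) ^ (α - 1) : ℝ) : ℂ) = F x := by
    intro x hx
    have hx0 : (0:ℝ) ≤ x := hx.1.le
    have hx1 : (0:ℝ) ≤ 1 - x := by linarith [hx.2]
    rw [hF, Complex.ofReal_mul, Complex.ofReal_cpow hx0, Complex.ofReal_cpow hx1]
    push_cast
    ring_nf
  have hIoc : IntegrableOn F (Ioc 0 1) volume := by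
    rwa [intervalIntegrable_iff_integrableOn_Ioc_of_le zero_le_one] at hconv
  have hreM : IntegrableOn (fun x : ℝ => x ^ (-α) * (1 - x) ^ (α - 1)) (Ioc 0 1) := by
    have hre : IntegrableOn (fun x : ℝ => (F x).re) (Ioc 0 1) := hIoc.re
    refine (integrable_congr ?_).mp hre
    filter_upwards [ae_restrict_mem measurableSet_Ioc] with x hx
    rw [← heq x hx]
    simp
  have hint : IntegrableOn (fun x : ℝ => x ^ (-α) * (1 - x) ^ (α - 1)) (Ioo 0 1) :=
    hreM.mono_set Ioo_subset_Ioc_self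
  refine ⟨hint, ?_⟩
  -- value
  have hbeta : Complex.betaIntegral (1 - (α:ℂ)) (α:ℂ) =
      Complex.Gamma (1 - (α:ℂ)) * Complex.Gamma (α:ℂ) := by
    have h := Complex.Gamma_mul_Gamma_eq_betaIntegral hu hv
    rw [sub_add_cancel, Complex.Gamma_one, one_mul] at h
    exact h.symm
  have hof : ((∫ x in Ioo (0:ℝ) 1, x ^ (-α) * (1 - x) ^ (α - 1) : ℝ) : ℂ) =
      Complex.betaIntegral (1 - (α:ℂ)) (α:ℂ) := by
    rw [Complex.betaIntegral, intervalIntegral.integral_of_le zero_le_one,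
      ← integral_Ioc_eq_integral_Ioo]
    rw [show ((∫ x in Ioc (0:ℝ) 1, x ^ (-α) * (1 - x) ^ (α - 1) : ℝ) : ℂ)
        = ∫ x in Ioc (0:ℝ) 1, ((x ^ (-α) * (1 - x) ^ (α - 1) : ℝ) : ℂ) from
      (integral_ofReal (𝕜 := ℂ)).symm]
    exact setIntegral_congr_fun measurableSet_Ioc heq
  have hval : ((∫ x in Ioo (0:ℝ) 1, x ^ (-α) * (1 - x) ^ (α - 1) : ℝ) : ℂ) =
      ((π / Real.sin (π * α) : ℝ) : ℂ) := by
    rw [hof, hbeta, Complex.Gamma_ofReal, ← Complex.ofReal_one, ← Complex.ofReal_sub,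
      Complex.Gamma_ofReal, ← Complex.ofReal_mul, mul_comm]
    norm_cast
    exact Real.Gamma_mul_Gamma_one_sub α
  exact_mod_cast hval

lemma base_int {α : ℝ} (hα : α ∈ Set.Ioo (0:ℝ) 1) :
    IntegrableOn (fun u : ℝ => u ^ (-α) * (1 + u)⁻¹) (Ioi 0) ∧
    ∫ u in Ioi (0:ℝ), u ^ (-α) * (1 + u)⁻¹ = π / Real.sin (π * α) := by
  obtain ⟨hα0, hα1⟩ := hα
  set φ : ℝ → ℝ := fun x => x / (1 - x) with hφ
  have hderiv : ∀ x ∈ Ioo (0:ℝ) 1, HasDerivWithinAt φ (((1-x)^2)⁻¹) (Ioo 0 1) x := by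
    intro x hx
    have hne : 1 - x ≠ 0 := by rw [sub_ne_zero]; exact fun h => (h ▸ hx.2).false
    have h : HasDerivAt φ ((1*(1-x) - x*(0-1)) / (1-x)^2) x :=
      (hasDerivAt_id x).div ((hasDerivAt_const x 1).sub (hasDerivAt_id x)) hne
    have : (1*(1-x) - x*(0-1)) / (1-x)^2 = ((1-x)^2)⁻¹ := by field_simp; ring
    exact (this ▸ h).hasDerivWithinAt
  have hinj : InjOn φ (Ioo 0 1) := by
    refine StrictMonoOn.injOn fun x hx y hy hxy => ?_
    have h1 : (0:ℝ) < 1 - x := by linarith [hx.2]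
    have h2 : (0:ℝ) < 1 - y := by linarith [hy.2]
    rw [hφ]
    dsimp only
    rw [div_lt_div_iff₀ h1 h2]
    nlinarith
  have himg : φ '' (Ioo 0 1) = Ioi 0 := by
    ext u
    constructor
    · rintro ⟨x, hx, rfl⟩
      exact div_pos hx.1 (by linarith [hx.2])
    · intro hu
      have hu0 : (0:ℝ) < u := hu
      have h1u : (0:ℝ) < 1 + u := by linarith
      refine ⟨u / (1 + u), ⟨div_pos hu0 h1u, (div_lt_one h1u).mpr (by linarith)⟩, ?_⟩
      rw [hφ]
      dsimp only
      have h2 : 1 - u / (1 + u) = (1 + u)⁻¹ := by field_simp; ring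
      rw [h2, div_inv_eq_mul, div_mul_cancel₀ _ h1u.ne']
  have hpt : ∀ x ∈ Ioo (0:ℝ) 1,
      |((1-x)^2)⁻¹| • ((φ x) ^ (-α) * (1 + φ x)⁻¹) = x ^ (-α) * (1 - x) ^ (α - 1) := by
    intro x hx
    have hx0 : (0:ℝ) < x := hx.1
    have hx1 : (0:ℝ) < 1 - x := by linarith [hx.2]
    have e1 : 1 + φ x = (1-x)⁻¹ := by rw [hφ]; field_simp; ring
    have e2 : (φ x) ^ (-α) = x ^ (-α) * (1-x) ^ α := by
      rw [hφ]
      dsimp only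
      rw [Real.div_rpow hx0.le hx1.le, div_eq_mul_inv, ← Real.rpow_neg hx1.le, neg_neg]
    rw [e1, e2, smul_eq_mul, abs_of_pos (by positivity), inv_inv,
      Real.rpow_sub hx1, Real.rpow_one]
    field_simp
  have h1 := integral_image_eq_integral_abs_deriv_smul measurableSet_Ioo hderiv hinj
    (fun u => u ^ (-α) * (1 + u)⁻¹)
  have h2 := integrableOn_image_iff_integrableOn_abs_deriv_smul measurableSet_Ioo hderiv hinj
    (fun u => u ^ (-α) * (1 + u)⁻¹)
  rw [himg] at h1 h2
  obtain ⟨hbint, hbval⟩ := beta_real ⟨hα0, hα1⟩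
  constructor
  · rw [h2]
    exact (integrable_congr ((ae_restrict_mem measurableSet_Ioo).mono fun x hx => hpt x hx)).mpr
      hbint
  · rw [h1, setIntegral_congr_fun measurableSet_Ioo hpt, hbval]

lemma key_int {α : ℝ} (hα : α ∈ Set.Ioo (0:ℝ) 1) {x : ℝ} (hx : 0 < x) :
    IntegrableOn (fun s : ℝ => s ^ (-α) * (x + s)⁻¹) (Ioi 0) ∧
    ∫ s in Ioi (0:ℝ), s ^ (-α) * (x + s)⁻¹ = (π / Real.sin (π * α)) * x ^ (-α) := by
  obtain ⟨hbint, hbval⟩ := base_int hα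
  set G : ℝ → ℝ := fun s => s ^ (-α) * (x + s)⁻¹ with hG
  have hcomp : ∀ u ∈ Ioi (0:ℝ), G (x * u) = (x ^ (-α) * x⁻¹) * (u ^ (-α) * (1 + u)⁻¹) := by
    intro u hu
    rw [hG]
    dsimp only
    rw [Real.mul_rpow hx.le (le_of_lt hu), show x + x * u = x * (1 + u) by ring,
      mul_inv]
    ring
  have hint : IntegrableOn G (Ioi 0) := by
    rw [show (0:ℝ) = x * 0 by ring, ← integrableOn_Ioi_comp_mul_left_iff G 0 hx]
    refine (integrable_congr ((ae_restrict_mem measurableSet_Ioi).mono fun u hu => ?_)).mpr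
      ((hbint.const_mul (x ^ (-α) * x⁻¹)))
    exact hcomp u hu
  refine ⟨hint, ?_⟩
  have h := integral_comp_mul_left_Ioi G 0 hx
  rw [mul_zero] at h
  rw [setIntegral_congr_fun measurableSet_Ioi hcomp] at h
  rw [integral_const_mul, hbval] at h
  have hx' : x ^ (-α) * x⁻¹ ≠ 0 := by positivity
  calc ∫ s in Ioi (0:ℝ), G s = x • (x⁻¹ • ∫ s in Ioi (0:ℝ), G s) := by
        rw [smul_smul, mul_inv_cancel₀ hx.ne', one_smul]
    _ = x • (x ^ (-α) * x⁻¹ * (π / Real.sin (π * α))) := by rw [← h]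
    _ = (π / Real.sin (π * α)) * x ^ (-α) := by
        rw [smul_eq_mul, show x * (x ^ (-α) * x⁻¹ * (π / Real.sin (π * α)))
          = (x * x⁻¹) * (x ^ (-α) * (π / Real.sin (π * α))) by ring,
          mul_inv_cancel₀ hx.ne', one_mul, mul_comm]

end Aux

open Set in
/-- In a unital C*-algebra, for a positive element `a`, `ε > 0` and `α ∈ (0,1)`, the Bochner
integral `(sin(απ)/π) ∫_0^∞ s^{-α} (a + (s+ε)·1)⁻¹ ds` converges in norm and equals the
real power `(a + ε·1)^{-α}` given by the continuous functional calculus. -/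
theorem stmt_7 (A : Type*) [CStarAlgebra A] [PartialOrder A] [StarOrderedRing A]
    (a : A) (ha : 0 ≤ a) (ε α : ℝ) (hε : 0 < ε) (hα : α ∈ Set.Ioo (0 : ℝ) 1) :
    IntegrableOn (fun s : ℝ =>
      ((s ^ (-α) : ℝ) : ℂ) • Ring.inverse (a + ((s + ε : ℝ) : ℂ) • (1 : A)))
      (Set.Ioi (0 : ℝ)) ∧
    ((Real.sin (α * π) / π : ℝ) : ℂ) •
        (∫ s in Set.Ioi (0 : ℝ),
          ((s ^ (-α) : ℝ) : ℂ) • Ring.inverse (a + ((s + ε : ℝ) : ℂ) • (1 : A))) =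
      cfc (fun x : ℝ => x ^ (-α)) (a + ((ε : ℝ) : ℂ) • (1 : A)) := by
  obtain ⟨hα0, hα1⟩ := hα
  have hsa : IsSelfAdjoint a := .of_nonneg ha
  set K := spectrum ℝ a with hK
  have hKnn : ∀ x : K, (0:ℝ) ≤ (x : ℝ) := fun x => spectrum_nonneg_of_nonneg ha x.2
  -- the continuous functional calculus as a continuous linear map
  let L : C(K, ℝ) →L[ℝ] A :=
    ⟨(cfcHom hsa (R := ℝ)).toAlgHom.toLinearMap, cfcHom_continuous hsa⟩
  have hL : ∀ f : C(K, ℝ), L f = cfcHom hsa f := fun _ => rfl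
  -- the integrand as a continuous-map-valued function
  have hGcont : Continuous fun p : ℝ × K => ((p.2 : ℝ) + max p.1 0 + ε)⁻¹ := by
    refine Continuous.inv₀ (by fun_prop) fun p => ?_
    have h1 := hKnn p.2
    have h2 : (0:ℝ) ≤ max p.1 0 := le_max_right _ _
    positivity
  set G : C(ℝ, C(K, ℝ)) := ContinuousMap.curry ⟨_, hGcont⟩ with hG
  set F : ℝ → C(K, ℝ) := fun s => s ^ (-α) • G s with hF
  have hFapp : ∀ (s : ℝ) (x : K), F s x = s ^ (-α) * ((x : ℝ) + max s 0 + ε)⁻¹ :=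
    fun s x => rfl
  -- generic facts
  have hcfc_eq : ∀ c : ℝ, 0 < c → a + c • (1 : A) = cfc (fun x : ℝ => x + c) a := by
    intro c hc
    have h : cfc (fun x : ℝ => x + c) a = a + algebraMap ℝ A c := by
      rw [show (fun x : ℝ => x + c) = (fun x : ℝ => id x + c) from rfl,
        cfc_add_const c id a continuousOn_id hsa, cfc_id ℝ a hsa]
    rw [h, Algebra.algebraMap_eq_smul_one]
  have hne : ∀ c : ℝ, 0 < c → ∀ x ∈ spectrum ℝ a, x + c ≠ 0 := by
    intro c hc x hx
    have := spectrum_nonneg_of_nonneg ha hx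
    positivity
  -- pointwise identity between the integrand and `L ∘ F`
  have hmain : ∀ s ∈ Ioi (0:ℝ),
      ((s ^ (-α) : ℝ) : ℂ) • Ring.inverse (a + ((s + ε : ℝ) : ℂ) • (1 : A)) = L (F s) := by
    intro s hs
    have hs0 : (0:ℝ) < s := hs
    have hc : (0:ℝ) < s + ε := by linarith
    have hcont1 : ContinuousOn (fun x : ℝ => (x + (s + ε))⁻¹) K :=
      ContinuousOn.inv₀ (by fun_prop) (hne _ hc)
    have hcont2 : ContinuousOn (fun x : ℝ => s ^ (-α) * (x + (s + ε))⁻¹) K :=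
      continuousOn_const.mul hcont1
    rw [show (((s + ε : ℝ)) : ℂ) = algebraMap ℝ ℂ (s + ε) from rfl,
      show ((s ^ (-α) : ℝ) : ℂ) = algebraMap ℝ ℂ (s ^ (-α)) from rfl,
      algebraMap_smul, algebraMap_smul, hcfc_eq _ hc,
      ← cfc_inv (fun x : ℝ => x + (s + ε)) a (hne _ hc) (by fun_prop) hsa,
      ← cfc_const_mul (s ^ (-α)) _ a hcont1,
      cfc_apply _ a hsa hcont2, ← hL]
    congr 1
    ext x
    have : max s 0 = s := max_eq_left hs0.le
    simp [hFapp, this, add_assoc]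
  -- integrability of `F`
  have hFcont : ContinuousOn F (Ioi 0) := by
    refine ContinuousOn.smul (f := fun s : ℝ => s ^ (-α)) (fun s hs => ?_) G.continuous.continuousOn
    exact (Real.continuousAt_rpow_const s (-α) (Or.inl (ne_of_gt hs))).continuousWithinAt
  have hFmeas : AEStronglyMeasurable F (volume.restrict (Ioi 0)) :=
    hFcont.aestronglyMeasurable measurableSet_Ioi
  have hbound := (key_int ⟨hα0, hα1⟩ hε).1
  have hFint : Integrable F (volume.restrict (Ioi 0)) := by
    refine Integrable.mono' hbound hFmeas ?_
    filter_upwards [ae_restrict_mem measurableSet_Ioi] with s hs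
    have hs0 : (0:ℝ) < s := hs
    have hsm : max s 0 = s := max_eq_left hs0.le
    refine (ContinuousMap.norm_le _ (by positivity)).mpr fun x => ?_
    rw [hFapp, hsm, Real.norm_eq_abs, abs_of_nonneg ?_]
    · have h1 := hKnn x
      have hd : ((x:ℝ) + s + ε)⁻¹ ≤ (ε + s)⁻¹ := by
        apply inv_anti₀ (by linarith) (by linarith)
      exact mul_le_mul_of_nonneg_left hd (Real.rpow_nonneg hs0.le _)
    · have h1 := hKnn x
      have h2 : (0:ℝ) < (x:ℝ) + s + ε := by linarith
      positivity
  have hcong : EqOn (fun s : ℝ =>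
      ((s ^ (-α) : ℝ) : ℂ) • Ring.inverse (a + ((s + ε : ℝ) : ℂ) • (1 : A)))
      (fun s => L (F s)) (Ioi 0) := fun s hs => hmain s hs
  have hLint : IntegrableOn (fun s => L (F s)) (Ioi 0) := L.integrable_comp hFint
  constructor
  · exact (integrableOn_congr_fun hcong measurableSet_Ioi).mpr hLint
  -- compute the integral of `F`
  have hnn2 : ∀ x : K, (0:ℝ) < (x : ℝ) + ε := fun x => by have := hKnn x; linarith
  have hgεcont : Continuous fun x : K => ((x : ℝ) + ε) ^ (-α) := by
    have hadd : Continuous fun x : K => (x : ℝ) + ε := by fun_prop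
    exact hadd.rpow_const fun x => Or.inl (hnn2 x).ne'
  set gε : C(K, ℝ) := ⟨_, hgεcont⟩ with hgε
  have hIF : (∫ s in Ioi (0:ℝ), F s) = (π / Real.sin (π * α)) • gε := by
    ext x
    have hev := (ContinuousMap.evalCLM ℝ x).integral_comp_comm hFint
    have : (∫ s in Ioi (0:ℝ), F s) x = ∫ s in Ioi (0:ℝ), F s x := by
      exact hev.symm
    rw [this]
    have : ∫ s in Ioi (0:ℝ), F s x
        = ∫ s in Ioi (0:ℝ), s ^ (-α) * (((x:ℝ) + ε) + s)⁻¹ := by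
      refine setIntegral_congr_fun measurableSet_Ioi fun s hs => ?_
      have hs0 : (0:ℝ) < s := hs
      rw [hFapp, max_eq_left hs0.le]
      ring_nf
    rw [this, (key_int ⟨hα0, hα1⟩ (hnn2 x)).2]
    simp [hgε, mul_comm]
  -- put everything together
  rw [setIntegral_congr_fun measurableSet_Ioi hcong, L.integral_comp_comm hFint, hIF,
    show ((Real.sin (α * π) / π : ℝ) : ℂ) = algebraMap ℝ ℂ (Real.sin (α * π) / π) from rfl,
    algebraMap_smul, L.map_smul, smul_smul]
  have hsin : Real.sin (π * α) ≠ 0 := by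
    refine ne_of_gt (Real.sin_pos_of_pos_of_lt_pi (by positivity) ?_)
    calc π * α < π * 1 := by
          exact mul_lt_mul_of_pos_left hα1 Real.pi_pos
      _ = π := mul_one π
  have hscal : Real.sin (α * π) / π * (π / Real.sin (π * α)) = 1 := by
    rw [mul_comm α π]
    field_simp
  rw [hscal, one_smul]
  -- identify `L gε` with the right-hand side
  have himg : ContinuousOn (fun x : ℝ => x ^ (-α)) ((fun x : ℝ => x + ε) '' K) := by
    rintro - ⟨x, hx, rfl⟩
    have hx0 : (0:ℝ) ≤ x := spectrum_nonneg_of_nonneg ha hx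
    exact (Real.continuousAt_rpow_const _ _ (Or.inl (by positivity))).continuousWithinAt
  have hcomp : ContinuousOn (fun x : ℝ => (x + ε) ^ (-α)) K := by
    intro x hx
    have hx0 : (0:ℝ) ≤ x := spectrum_nonneg_of_nonneg ha hx
    exact ((Real.continuousAt_rpow_const _ _ (Or.inl (by positivity))).comp
      (by fun_prop)).continuousWithinAt
  rw [show (((ε : ℝ)) : ℂ) = algebraMap ℝ ℂ ε from rfl, algebraMap_smul, hcfc_eq ε hε,
    ← cfc_comp (fun x : ℝ => x ^ (-α)) (fun x : ℝ => x + ε) a hsa himg (by fun_prop),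
    show ((fun x : ℝ => x ^ (-α)) ∘ fun x : ℝ => x + ε) = fun x : ℝ => (x + ε) ^ (-α) from rfl,
    cfc_apply _ a hsa hcomp, ← hL]
  rfl
end

section
/- For every real m > 0, the Fejér kernel f_m is differentiable on \mathbb{R} and its derivative satisfies |f_m'(t)| \le m^2/\pi for all t \in \mathbb{R}. -/
open MeasureTheory Real

/-- The Fejér kernel on `ℝ`: `f_m(0) = m/(2π)` and `f_m(t) = (1 - cos(mt))/(π m t²)` for
`t ≠ 0`. -/
noncomputable def fejer (m t : ℝ) : ℝ :=
  if t = 0 then m / (2 * π) else (1 - Real.cos (m * t)) / (π * m * t ^ 2)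

/-- Auxiliary: `J m x = ∫ t in 0..1, cos (m x t / 2)`. -/
noncomputable def fejerJ (m x : ℝ) : ℝ := ∫ t in (0:ℝ)..1, Real.cos (m * x * t / 2)

lemma fejerJ_eq (m x : ℝ) (hmx : m * x ≠ 0) :
    fejerJ m x = Real.sin (m * x / 2) / (m * x / 2) := by
  have hc : m * x / 2 ≠ 0 := by positivity
  have h : (fun t : ℝ => Real.cos (m * x * t / 2)) = fun t => Real.cos ((m * x / 2) * t) := by
    funext t; ring_nf
  rw [fejerJ, h, intervalIntegral.integral_comp_mul_left Real.cos hc, mul_zero, mul_one,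
    integral_cos]
  simp [div_eq_inv_mul]

lemma fejer_eq (m : ℝ) (hm : 0 < m) (x : ℝ) :
    fejer m x = m / (2 * π) * (fejerJ m x) ^ 2 := by
  rcases eq_or_ne x 0 with rfl | hx
  · simp [fejer, fejerJ]
  · have hmx : m * x ≠ 0 := mul_ne_zero hm.ne' hx
    rw [fejer, if_neg hx, fejerJ_eq m x hmx]
    have hsin : Real.sin (m * x / 2) ^ 2 = 1 / 2 - Real.cos (m * x) / 2 := by
      have := Real.sin_sq_eq_half_sub (m * x / 2)
      rwa [show 2 * (m * x / 2) = m * x by ring] at this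
    have hπ : (π : ℝ) ≠ 0 := Real.pi_ne_zero
    field_simp [div_pow]
    linear_combination (-2) * hsin

lemma fejerJ_hasDerivAt (m x : ℝ) :
    HasDerivAt (fejerJ m)
      (∫ t in (0:ℝ)..1, -(m * t / 2) * Real.sin (m * x * t / 2)) x := by
  have h := intervalIntegral.hasDerivAt_integral_of_dominated_loc_of_deriv_le
    (F := fun x t => Real.cos (m * x * t / 2))
    (F' := fun x t => -(m * t / 2) * Real.sin (m * x * t / 2))
    (bound := fun _ => |m| / 2) (a := 0) (b := 1) (μ := volume) (x₀ := x)
    (s := Metric.ball x 1) (Metric.ball_mem_nhds x one_pos)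
    (Filter.Eventually.of_forall fun y =>
      (Continuous.aestronglyMeasurable (by fun_prop)))
    ((Continuous.intervalIntegrable (by fun_prop) 0 1))
    (Continuous.aestronglyMeasurable (by fun_prop))
    ?_
    (intervalIntegrable_const)
    ?_
  · exact h.2
  · refine Filter.Eventually.of_forall fun t ht y _ => ?_
    have ht' : t ∈ Set.Ioc (0:ℝ) 1 := by simpa [Set.uIoc_of_le] using ht
    have h1 : |Real.sin (m * y * t / 2)| ≤ 1 := Real.abs_sin_le_one _
    have h2 : |t| ≤ 1 := by rw [abs_of_pos ht'.1]; exact ht'.2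
    calc ‖-(m * t / 2) * Real.sin (m * y * t / 2)‖
        = (|m| * |t| / 2) * |Real.sin (m * y * t / 2)| := by
          rw [Real.norm_eq_abs, abs_mul, abs_neg, abs_div, abs_mul]; norm_num
      _ ≤ (|m| * 1 / 2) * 1 := by
          apply mul_le_mul _ h1 (abs_nonneg _) (by positivity)
          gcongr
      _ = |m| / 2 := by ring
  · refine Filter.Eventually.of_forall fun t _ y _ => ?_
    have hinner : HasDerivAt (fun y : ℝ => m * y * t / 2) (m * t / 2) y := by
      have h : (fun y : ℝ => m * y * t / 2) = fun y => (m * t / 2) * y := by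
        funext y; ring
      rw [h]
      simpa using (hasDerivAt_id y).const_mul (m * t / 2)
    have := (Real.hasDerivAt_cos (m * y * t / 2)).comp y hinner
    rw [show -(m * t / 2) * Real.sin (m * y * t / 2) = -Real.sin (m * y * t / 2) * (m * t / 2) by ring]
    exact this

lemma fejerJ_abs_le (m x : ℝ) : |fejerJ m x| ≤ 1 := by
  have := intervalIntegral.norm_integral_le_of_norm_le_const
    (C := 1) (f := fun t => Real.cos (m * x * t / 2)) (a := 0) (b := 1)
    (fun t _ => by rw [Real.norm_eq_abs]; exact Real.abs_cos_le_one _)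
  simpa [fejerJ] using this

lemma fejerJ_deriv_abs_le (m x : ℝ) (hm : 0 < m) :
    |∫ t in (0:ℝ)..1, -(m * t / 2) * Real.sin (m * x * t / 2)| ≤ m / 2 := by
  have key : ∀ t ∈ Set.uIoc (0:ℝ) 1,
      ‖-(m * t / 2) * Real.sin (m * x * t / 2)‖ ≤ m / 2 := by
    intro t ht
    have ht' : t ∈ Set.Ioc (0:ℝ) 1 := by simpa [Set.uIoc_of_le] using ht
    have h1 : |Real.sin (m * x * t / 2)| ≤ 1 := Real.abs_sin_le_one _
    calc ‖-(m * t / 2) * Real.sin (m * x * t / 2)‖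
        = (m * t / 2) * |Real.sin (m * x * t / 2)| := by
          rw [Real.norm_eq_abs, abs_mul, abs_neg,
            abs_of_nonneg (div_nonneg (mul_nonneg hm.le ht'.1.le) (by norm_num))]
      _ ≤ (m * 1 / 2) * 1 := by
          apply mul_le_mul _ h1 (abs_nonneg _) (by positivity)
          gcongr
          exact ht'.2
      _ = m / 2 := by ring
  have := intervalIntegral.norm_integral_le_of_norm_le_const key
  simpa using this

/-- For every `m > 0`, the Fejér kernel `f_m` is differentiable on `ℝ` and its derivative
satisfies `|f_m'(t)| ≤ m²/π` for all `t`. -/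
theorem stmt_11 (m : ℝ) (hm : 0 < m) :
    Differentiable ℝ (fejer m) ∧ ∀ t : ℝ, |deriv (fejer m) t| ≤ m ^ 2 / π := by
  have hfun : fejer m = fun x => m / (2 * π) * (fejerJ m x) ^ 2 :=
    funext (fejer_eq m hm)
  have hd : ∀ x : ℝ, HasDerivAt (fejer m)
      (m / (2 * π) * (2 * fejerJ m x ^ 1 *
        ∫ t in (0:ℝ)..1, -(m * t / 2) * Real.sin (m * x * t / 2))) x := by
    intro x
    rw [hfun]
    exact (((fejerJ_hasDerivAt m x).pow 2).const_mul (m / (2 * π)))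
  constructor
  · exact fun x => (hd x).differentiableAt
  · intro x
    rw [(hd x).deriv]
    have hπ : (0:ℝ) < π := Real.pi_pos
    have h1 := fejerJ_abs_le m x
    have h2 := fejerJ_deriv_abs_le m x hm
    set J' := ∫ t in (0:ℝ)..1, -(m * t / 2) * Real.sin (m * x * t / 2)
    calc |m / (2 * π) * (2 * fejerJ m x ^ 1 * J')|
        = m / (2 * π) * (2 * |fejerJ m x| * |J'|) := by
          rw [abs_mul, abs_of_pos (show (0:ℝ) < m / (2 * π) by positivity), abs_mul, abs_mul]
          norm_num
      _ ≤ m / (2 * π) * (2 * 1 * (m / 2)) := by gcongr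
      _ = m ^ 2 / (2 * π) := by ring
      _ ≤ m ^ 2 / π := by
          apply div_le_div_of_nonneg_left (by positivity) hπ
          linarith
end

section
/- For every real t, \arctan(t) = \frac{t}{1 + t^2} \sum_{n=0}^{\infty} \frac{(n!)^2 \, 4^n}{(2n+1)!} \left( \frac{t^2}{1 + t^2} \right)^n, the series converging for every real t (Euler's arctangent series). -/
noncomputable def eA (n : ℕ) : ℝ := (n.factorial : ℝ) ^ 2 * 4 ^ n / ((2 * n + 1).factorial : ℝ)

lemma eA_pos (n : ℕ) : 0 < eA n := by
  apply div_pos (by positivity)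
  exact_mod_cast Nat.factorial_pos _

lemma eA_rec (n : ℕ) : (2 * (n:ℝ) + 3) * eA (n + 1) = (2 * n + 2) * eA n := by
  have h1 : (2 * (n + 1) + 1).factorial = (2*n+3) * ((2*n+2) * (2*n+1).factorial) := by
    have : 2 * (n+1) + 1 = (2*n+2) + 1 := by ring
    rw [this, Nat.factorial_succ, show 2*n+2 = (2*n+1)+1 from by ring, Nat.factorial_succ]
  have hf : ((2*n+1).factorial : ℝ) ≠ 0 := by exact_mod_cast (Nat.factorial_pos _).ne'
  unfold eA
  rw [h1, Nat.factorial_succ]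
  push_cast
  field_simp
  ring

lemma eA_zero : eA 0 = 1 := by simp [eA]

lemma eA_le_one (n : ℕ) : eA n ≤ 1 := by
  induction n with
  | zero => simp [eA_zero]
  | succ n ih =>
    have h := eA_rec n
    have h3 : (0:ℝ) < 2 * n + 3 := by positivity
    have : eA (n+1) = (2*(n:ℝ)+2)/(2*n+3) * eA n := by
      field_simp
      linarith [h]
    rw [this]
    calc (2*(n:ℝ)+2)/(2*n+3) * eA n ≤ 1 * 1 := by
          apply mul_le_mul _ ih (eA_pos n).le zero_le_one
          rw [div_le_one h3]; linarith
      _ = 1 := by ring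

noncomputable def eG (y : ℝ) : ℝ := ∑' n : ℕ, eA n * y ^ (2 * n + 1)

lemma summable_aux {r : ℝ} (hr0 : 0 ≤ r) (hr : r < 1) :
    Summable (fun n : ℕ => (2 * (n:ℝ) + 1) * r ^ (2 * n)) := by
  have h2 : r ^ 2 < 1 := by nlinarith
  have hs : Summable (fun n : ℕ => (n:ℝ) * (r^2) ^ n + (n:ℝ) * (r^2) ^ n + (r^2)^n) := by
    refine Summable.add (Summable.add ?_ ?_) ?_
    · simpa using summable_pow_mul_geometric_of_norm_lt_one 1
        (r := r^2) (by rw [Real.norm_eq_abs, abs_of_nonneg (by positivity)]; exact h2)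
    · simpa using summable_pow_mul_geometric_of_norm_lt_one 1
        (r := r^2) (by rw [Real.norm_eq_abs, abs_of_nonneg (by positivity)]; exact h2)
    · exact summable_geometric_of_lt_one (by positivity) h2
  apply hs.of_nonneg_of_le (fun n => by positivity)
  intro n
  rw [pow_mul]
  nlinarith [pow_nonneg (sq_nonneg r) n]

lemma summable_eG_deriv {y : ℝ} (hy : |y| < 1) :
    Summable (fun n : ℕ => (2 * (n:ℝ) + 1) * eA n * y ^ (2 * n)) := by
  apply (summable_aux (abs_nonneg y) hy).of_nonneg_of_le
  · intro n
    have h1 := eA_pos n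
    have h2 : (0:ℝ) ≤ y ^ (2*n) := by rw [pow_mul]; positivity
    exact mul_nonneg (mul_nonneg (by positivity) h1.le) h2
  · intro n
    have h1 : y ^ (2*n) = |y| ^ (2*n) := by
      rw [pow_mul, pow_mul, ← abs_pow, abs_of_nonneg (by positivity)]
    rw [h1]
    have h2 : (0:ℝ) ≤ |y| ^ (2*n) := by positivity
    have h3 : (0:ℝ) < 2*(n:ℝ)+1 := by positivity
    nlinarith [mul_nonneg (mul_nonneg h3.le h2) (sub_nonneg.2 (eA_le_one n))]

lemma summable_eG {y : ℝ} (hy : |y| < 1) :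
    Summable (fun n : ℕ => eA n * y ^ (2 * n + 1)) := by
  apply Summable.of_norm_bounded (summable_eG_deriv hy)
  intro n
  have h0 := eA_pos n
  have hyy : |y| ^ (2*n) = y ^ (2*n) := by
    rw [pow_mul, pow_mul, ← abs_pow, abs_of_nonneg (by positivity)]
  rw [Real.norm_eq_abs, abs_mul, abs_of_pos h0, pow_succ, abs_mul, abs_pow, hyy]
  have h2 : (0:ℝ) ≤ y ^ (2*n) := hyy ▸ by positivity
  nlinarith [mul_nonneg h0.le h2, mul_nonneg (mul_nonneg h0.le h2) (sub_nonneg.2 hy.le),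
    mul_nonneg h2 (abs_nonneg y)]

lemma eG_hasDerivAt {y : ℝ} (hy : |y| < 1) :
    HasDerivAt eG (∑' n : ℕ, (2 * (n:ℝ) + 1) * eA n * y ^ (2 * n)) y := by
  set r : ℝ := (1 + |y|) / 2 with hrdef
  have hr0 : 0 ≤ r := by positivity
  have hr1 : r < 1 := by simp only [hrdef]; linarith
  have hyr : |y| < r := by simp only [hrdef]; linarith [abs_nonneg y]
  have hmem : ∀ z : ℝ, z ∈ Metric.ball (0:ℝ) r ↔ |z| < r := by
    intro z; rw [Metric.mem_ball, Real.dist_eq, sub_zero]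
  have := hasDerivAt_tsum_of_isPreconnected
    (g := fun (n : ℕ) (z : ℝ) => eA n * z ^ (2*n+1))
    (g' := fun (n : ℕ) (z : ℝ) => (2*(n:ℝ)+1) * eA n * z ^ (2*n))
    (u := fun n : ℕ => (2 * (n:ℝ) + 1) * r ^ (2 * n))
    (t := Metric.ball (0:ℝ) r) (y₀ := 0) (y := y)
    (summable_aux hr0 hr1) Metric.isOpen_ball
    ((convex_ball (0:ℝ) r).isPreconnected) ?_ ?_ ?_ ?_ ?_
  · exact this
  · intro n z _
    have h := (hasDerivAt_pow (2*n+1) z).const_mul (eA n)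
    convert h using 1
    · rfl
    push_cast
    ring_nf
  · intro n z hz
    rw [hmem] at hz
    have hzz : z ^ (2*n) = |z| ^ (2*n) := by
      rw [pow_mul, pow_mul, ← abs_pow, abs_of_nonneg (by positivity)]
    rw [Real.norm_eq_abs, abs_mul, abs_mul, abs_of_pos (by positivity : (0:ℝ) < 2*(n:ℝ)+1),
      abs_of_pos (eA_pos n), abs_pow]
    have h1 : |z| ^ (2*n) ≤ r ^ (2*n) := pow_le_pow_left₀ (abs_nonneg z) hz.le _
    have h2 : (0:ℝ) ≤ |z| ^ (2*n) := by positivity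
    have h4 : (0:ℝ) ≤ r ^ (2*n) := by positivity
    show (2*(n:ℝ)+1) * eA n * |z| ^ (2*n) ≤ (2*(n:ℝ)+1) * r ^ (2*n)
    nlinarith [eA_le_one n, eA_pos n,
      mul_nonneg (mul_nonneg (by positivity : (0:ℝ) ≤ 2*(n:ℝ)+1) h2) (sub_nonneg.2 (eA_le_one n)),
      mul_le_mul_of_nonneg_left h1 (by positivity : (0:ℝ) ≤ 2*(n:ℝ)+1)]
  · rw [hmem]; simpa using lt_of_le_of_lt (abs_nonneg y) hyr
  · have : (fun n : ℕ => eA n * (0:ℝ)^(2*n+1)) = fun _ => (0:ℝ) := by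
      ext n; simp
    rw [this]; exact summable_zero
  · rw [hmem]; exact hyr

lemma eG_key {y : ℝ} (hy : |y| < 1) :
    (1 - y^2) * (∑' n : ℕ, (2 * (n:ℝ) + 1) * eA n * y ^ (2 * n)) - y * eG y = 1 := by
  set b : ℕ → ℝ := fun n => (2*(n:ℝ)+1) * eA n * y ^ (2*n) with hbdef
  have hsb : Summable b := summable_eG_deriv hy
  have hsb' : Summable (fun n => b (n+1)) := (summable_nat_add_iff 1).2 hsb
  have hterm : ∀ n : ℕ, (1 - y^2) * b n - y * (eA n * y^(2*n+1)) = b n - b (n+1) := by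
    intro n
    have hr := eA_rec n
    simp only [hbdef]
    have e1 : y ^ (2*(n+1)) = y^(2*n) * y^2 := by rw [← pow_add]; ring_nf
    have e2 : y ^ (2*n+1) = y^(2*n) * y := pow_succ y (2*n)
    rw [e1, e2]
    push_cast
    linear_combination (y^(2*n) * y^2) * hr
  have h1 : (1 - y^2) * (∑' n, b n) - y * eG y
      = ∑' n : ℕ, ((1 - y^2) * b n - y * (eA n * y^(2*n+1))) := by
    rw [eG, ← tsum_mul_left, ← tsum_mul_left,
      ← Summable.tsum_sub (hsb.mul_left _) ((summable_eG hy).mul_left _)]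
  rw [h1, tsum_congr hterm, Summable.tsum_sub hsb hsb', Summable.tsum_eq_zero_add hsb]
  have hb0 : b 0 = 1 := by simp [hbdef, eA_zero]
  rw [hb0]
  ring

lemma eG_zero : eG 0 = 0 := by
  unfold eG
  have : (fun n : ℕ => eA n * (0:ℝ)^(2*n+1)) = fun _ => (0:ℝ) := by ext n; simp
  rw [this, tsum_zero]

lemma sqrt_eG_eq_arcsin {y : ℝ} (hy : y ∈ Set.Ioo (-1:ℝ) 1) :
    Real.sqrt (1 - y^2) * eG y = Real.arcsin y := by
  set H : ℝ → ℝ := fun z => Real.sqrt (1 - z^2) * eG z - Real.arcsin z with hHdef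
  have hH : ∀ z ∈ Set.Ioo (-1:ℝ) 1, HasDerivAt H 0 z := by
    intro z hz
    obtain ⟨hz1, hz2⟩ := hz
    have hz2' : (0:ℝ) < 1 - z^2 := by nlinarith
    have hs : 0 < Real.sqrt (1 - z^2) := Real.sqrt_pos.2 hz2'
    have hs2 : Real.sqrt (1 - z^2) * Real.sqrt (1 - z^2) = 1 - z^2 :=
      Real.mul_self_sqrt hz2'.le
    have hzabs : |z| < 1 := abs_lt.2 ⟨hz1, hz2⟩
    have hsq : HasDerivAt (fun w : ℝ => Real.sqrt (1 - w^2))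
        (1 / (2 * Real.sqrt (1 - z^2)) * (-(2 * z^1))) z := by
      exact (Real.hasDerivAt_sqrt hz2'.ne').comp z ((hasDerivAt_pow 2 z).const_sub 1)
    have hGd := eG_hasDerivAt hzabs
    have harc := Real.hasDerivAt_arcsin (x := z) (by linarith) (by linarith)
    have key := eG_key hzabs
    set S := ∑' n : ℕ, (2 * (n:ℝ) + 1) * eA n * z ^ (2 * n) with hSdef
    have htot := (hsq.mul hGd).sub harc
    set s := Real.sqrt (1 - z^2)
    have hnum : (1 - z^2) * S - z * eG z - 1 = 0 := by linear_combination key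
    have hD : 1/(2*s) * -(2*z^1)*eG z + s*S - 1/s = 0 := by
      have hexp : 1/(2*s) * -(2*z^1)*eG z + s*S - 1/s = ((1-z^2)*S - z*eG z - 1)/s := by
        rw [← hs2]
        field_simp
        ring
      rw [hexp, hnum, zero_div]
    exact hD ▸ htot
  have hdiff : DifferentiableOn ℝ H (Set.Ioo (-1:ℝ) 1) :=
    fun z hz => (hH z hz).differentiableAt.differentiableWithinAt
  have hfd : ∀ z ∈ Set.Ioo (-1:ℝ) 1, fderivWithin ℝ H (Set.Ioo (-1:ℝ) 1) z = 0 := by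
    intro z hz
    rw [fderivWithin_of_isOpen isOpen_Ioo hz, (hH z hz).hasFDerivAt.fderiv]
    ext w
    simp
  have h0 : (0:ℝ) ∈ Set.Ioo (-1:ℝ) 1 := by constructor <;> norm_num
  have := (convex_Ioo (-1:ℝ) 1).is_const_of_fderivWithin_eq_zero hdiff hfd hy h0
  have hH0 : H 0 = 0 := by simp [hHdef, eG_zero]
  have : H y = 0 := this.trans hH0
  simpa [hHdef, sub_eq_zero] using this

/-- Euler's arctangent series: for every real `t`,
`arctan t = (t/(1+t²)) ∑_{n≥0} (n!)² 4ⁿ/(2n+1)! · (t²/(1+t²))ⁿ`, the series converging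
for every real `t`. -/
theorem stmt_14 (t : ℝ) :
    HasSum (fun n : ℕ =>
      (t / (1 + t ^ 2)) *
        (((n.factorial : ℝ) ^ 2 * 4 ^ n / ((2 * n + 1).factorial : ℝ)) *
          (t ^ 2 / (1 + t ^ 2)) ^ n))
      (Real.arctan t) := by
  have h1t : (0:ℝ) < 1 + t^2 := by positivity
  set c := Real.sqrt (1 + t^2) with hc
  have hc0 : 0 < c := Real.sqrt_pos.2 h1t
  have hc2 : c^2 = 1 + t^2 := Real.sq_sqrt h1t.le
  set y := t / c with hydef
  have hy2 : y^2 = t^2/(1+t^2) := by rw [hydef, div_pow, hc2]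
  have hysq : y^2 < 1 := by rw [hy2, div_lt_one h1t]; linarith
  have hylt : |y| < 1 := by
    rw [abs_lt]; constructor <;> nlinarith [hysq]
  have hmem : y ∈ Set.Ioo (-1:ℝ) 1 := abs_lt.1 hylt
  have h1y : 1 - y^2 = 1/(1+t^2) := by rw [hy2]; field_simp; ring
  have hsy : Real.sqrt (1 - y^2) = 1/c := by
    rw [h1y, hc, one_div, one_div, Real.sqrt_inv]
  have harctan : Real.arctan t = Real.arcsin y := Real.arctan_eq_arcsin t
  have hsum : HasSum (fun n : ℕ => Real.sqrt (1 - y^2) * (eA n * y^(2*n+1)))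
      (Real.arctan t) := by
    have h2 := (summable_eG hylt).hasSum.mul_left (Real.sqrt (1 - y^2))
    rw [show (∑' n : ℕ, eA n * y^(2*n+1)) = eG y from rfl] at h2
    rwa [sqrt_eG_eq_arcsin hmem, ← harctan] at h2
  convert hsum using 2 with n
  show (t / (1 + t ^ 2)) * (eA n * (t ^ 2 / (1 + t ^ 2)) ^ n)
      = Real.sqrt (1 - y^2) * (eA n * y^(2*n+1))
  have hypow : y^(2*n+1) = (t^2/(1+t^2))^n * (t/c) := by
    rw [pow_succ, pow_mul, hy2, hydef]
  rw [hsy, hypow]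
  rw [show (1:ℝ)/c * (eA n * ((t^2/(1+t^2))^n * (t/c))) = t/(c^2) * (eA n * (t^2/(1+t^2))^n) by ring, hc2]
end
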